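/- Two-sided barrier from Łojasiewicz ODE: under the hypotheses of the previous comparison, suppose additionally that φ(S) ≥ −ε. Then for all s ∈ [0, S], −ϕ(S − s) ≤ φ(s) ≤ ϕ(s), where ϕ(s) = (ε^{−(2−α)/α} + (2(2−α)/(K²α)) s)^{−α/(2−α)}. -/

import Mathlib

/-- Key one-sided comparison: if `ψ > 0` on `[a,b]`, `ψ' ≤ -(2/K²) ψ^{2/α}` and
`ψ(a) ≤ ε`, then `ψ(b)` is bounded by the barrier. -/
lemma lojasiewicz_barrier_key (K α ε : ℝ) (hK : 1 ≤ K) (hα₁ : 1 < α) (hα₂ : α < 2)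
    (hε : 0 < ε) (a b : ℝ) (hab : a ≤ b) (ψ ψ' : ℝ → ℝ)
    (hψ : ∀ t ∈ Set.Icc a b, HasDerivAt ψ (ψ' t) t)
    (hpos : ∀ t ∈ Set.Icc a b, 0 < ψ t)
    (hODE : ∀ t ∈ Set.Icc a b, ψ' t ≤ -(2 / K ^ 2) * ψ t ^ (2 / α))
    (hstart : ψ a ≤ ε) :
    ψ b ≤ (ε ^ (-(2 - α) / α) + (2 * (2 - α) / (K ^ 2 * α)) * (b - a))
      ^ (-α / (2 - α)) := by
  have hα0 : (0 : ℝ) < α := by linarith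
  have h2α : (0 : ℝ) < 2 - α := by linarith
  have hK0 : (0 : ℝ) < K ^ 2 := by positivity
  set β : ℝ := (2 - α) / α with hβdef
  set c : ℝ := 2 * (2 - α) / (K ^ 2 * α) with hcdef
  have hβ : 0 < β := by positivity
  have hc : 0 < c := by positivity
  set g : ℝ → ℝ := fun t => ψ t ^ (-β) - c * t with hgdef
  have hg' : ∀ x ∈ Set.Icc a b,
      HasDerivAt g (ψ' x * (-β) * ψ x ^ (-β - 1) - c) x := by
    intro x hx
    have h1 : HasDerivAt (fun t => ψ t ^ (-β)) (ψ' x * (-β) * ψ x ^ (-β - 1)) x :=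
      (hψ x hx).rpow_const (Or.inl (hpos x hx).ne')
    have h2 : HasDerivAt (fun t : ℝ => c * t) c x := by
      simpa using (hasDerivAt_id x).const_mul c
    exact h1.sub h2
  have hkey : ∀ x ∈ Set.Icc a b, c ≤ ψ' x * (-β) * ψ x ^ (-β - 1) := by
    intro x hx
    have hψx := hpos x hx
    have hp : (0 : ℝ) < ψ x ^ (-β - 1) := Real.rpow_pos_of_pos hψx _
    have hneg : (-β) * ψ x ^ (-β - 1) ≤ 0 := by nlinarith
    have h1 := hODE x hx
    have h2 : (-(2 / K ^ 2) * ψ x ^ (2 / α)) * ((-β) * ψ x ^ (-β - 1))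
        ≤ ψ' x * ((-β) * ψ x ^ (-β - 1)) := mul_le_mul_of_nonpos_right h1 hneg
    have h3 : (-(2 / K ^ 2) * ψ x ^ (2 / α)) * ((-β) * ψ x ^ (-β - 1)) = c := by
      have hadd : ψ x ^ (2 / α) * ψ x ^ (-β - 1) = 1 := by
        rw [← Real.rpow_add hψx]
        have : 2 / α + (-β - 1) = 0 := by
          rw [hβdef]; field_simp; ring
        rw [this, Real.rpow_zero]
      calc (-(2 / K ^ 2) * ψ x ^ (2 / α)) * ((-β) * ψ x ^ (-β - 1))
          = (2 / K ^ 2) * β * (ψ x ^ (2 / α) * ψ x ^ (-β - 1)) := by ring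
        _ = (2 / K ^ 2) * β := by rw [hadd, mul_one]
        _ = c := by rw [hβdef, hcdef]; field_simp
    calc c = (-(2 / K ^ 2) * ψ x ^ (2 / α)) * ((-β) * ψ x ^ (-β - 1)) := h3.symm
      _ ≤ ψ' x * ((-β) * ψ x ^ (-β - 1)) := h2
      _ = ψ' x * (-β) * ψ x ^ (-β - 1) := by ring
  have hmono : MonotoneOn g (Set.Icc a b) := by
    apply monotoneOn_of_deriv_nonneg (convex_Icc a b)
    · intro x hx; exact (hg' x hx).continuousAt.continuousWithinAt
    · intro x hx
      rw [interior_Icc] at hx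
      exact (hg' x (Set.mem_Icc_of_Ioo hx)).differentiableAt.differentiableWithinAt
    · intro x hx
      rw [interior_Icc] at hx
      rw [(hg' x (Set.mem_Icc_of_Ioo hx)).deriv]
      have := hkey x (Set.mem_Icc_of_Ioo hx)
      linarith
  have hga : g a ≤ g b :=
    hmono (Set.left_mem_Icc.2 hab) (Set.right_mem_Icc.2 hab) hab
  have h0 : ε ^ (-β) ≤ ψ a ^ (-β) :=
    Real.rpow_le_rpow_of_nonpos (hpos a (Set.left_mem_Icc.2 hab)) hstart
      (by linarith)
  have hB : ε ^ (-β) + c * (b - a) ≤ ψ b ^ (-β) := by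
    simp only [hgdef] at hga
    nlinarith
  have hBpos : 0 < ε ^ (-β) + c * (b - a) := by
    have := Real.rpow_pos_of_pos hε (-β)
    nlinarith
  have hexp : -α / (2 - α) ≤ 0 := by
    apply div_nonpos_of_nonpos_of_nonneg <;> linarith
  have hfin := Real.rpow_le_rpow_of_nonpos hBpos hB hexp
  have hψb : (ψ b ^ (-β)) ^ (-α / (2 - α)) = ψ b := by
    rw [← Real.rpow_mul (hpos b (Set.right_mem_Icc.2 hab)).le]
    have h1 : -β * (-α / (2 - α)) = 1 := by rw [hβdef]; field_simp
    rw [h1, Real.rpow_one]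
  rw [hψb] at hfin
  have hneg : -(2 - α) / α = -β := by rw [hβdef]; ring
  rw [hneg]
  exact hfin

/-- two-sided barrier from the Łojasiewicz ODE: let `K ≥ 1`,
`1 < α < 2`, `ε > 0`, `φ : [0,S] → ℝ` differentiable with
`φ' + (2/K²)|φ|^{2/α} ≤ 0`, `φ(0) ≤ ε` and additionally `φ(S) ≥ −ε`. Then
`−ϕ(S − s) ≤ φ(s) ≤ ϕ(s)` on `[0,S]`, where
`ϕ(s) = (ε^{−(2−α)/α} + (2(2−α)/(K²α)) s)^{−α/(2−α)}`. -/
theorem lojasiewicz_two_sided_barrier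
    (K α ε S : ℝ) (hK : 1 ≤ K) (hα₁ : 1 < α) (hα₂ : α < 2) (hε : 0 < ε)
    (hS : 0 ≤ S) (φ φ' : ℝ → ℝ)
    (hφ : ∀ s ∈ Set.Icc 0 S, HasDerivAt φ (φ' s) s)
    (hODE : ∀ s ∈ Set.Icc 0 S, φ' s + (2 / K ^ 2) * |φ s| ^ (2 / α) ≤ 0)
    (h0 : φ 0 ≤ ε) (hSlow : φ S ≥ -ε) :
    ∀ s ∈ Set.Icc 0 S,
      -((ε ^ (-(2 - α) / α) + (2 * (2 - α) / (K ^ 2 * α)) * (S - s))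
          ^ (-α / (2 - α))) ≤ φ s ∧
      φ s ≤ (ε ^ (-(2 - α) / α) + (2 * (2 - α) / (K ^ 2 * α)) * s)
        ^ (-α / (2 - α)) := by
  have hα0 : (0 : ℝ) < α := by linarith
  have h2α : (0 : ℝ) < 2 - α := by linarith
  have hK0 : (0 : ℝ) < K ^ 2 := by positivity
  have hc : (0 : ℝ) < 2 * (2 - α) / (K ^ 2 * α) := by positivity
  have hεβ : (0 : ℝ) < ε ^ (-(2 - α) / α) := Real.rpow_pos_of_pos hε _
  -- φ is antitone on [0, S]
  have hanti : AntitoneOn φ (Set.Icc 0 S) := by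
    apply antitoneOn_of_deriv_nonpos (convex_Icc 0 S)
    · intro x hx; exact (hφ x hx).continuousAt.continuousWithinAt
    · intro x hx
      rw [interior_Icc] at hx
      exact (hφ x (Set.mem_Icc_of_Ioo hx)).differentiableAt.differentiableWithinAt
    · intro x hx
      rw [interior_Icc] at hx
      rw [(hφ x (Set.mem_Icc_of_Ioo hx)).deriv]
      have h1 := hODE x (Set.mem_Icc_of_Ioo hx)
      have h2 : 0 ≤ (2 / K ^ 2) * |φ x| ^ (2 / α) := by positivity
      linarith
  intro s hs
  obtain ⟨hs0, hsS⟩ := hs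
  constructor
  · -- lower bound
    by_cases hφs : 0 ≤ φ s
    · have hb : (0 : ℝ) ≤ (ε ^ (-(2 - α) / α)
          + 2 * (2 - α) / (K ^ 2 * α) * (S - s)) ^ (-α / (2 - α)) := by
        apply Real.rpow_nonneg
        nlinarith
      linarith
    · push_neg at hφs
      have hneg : ∀ t ∈ Set.Icc 0 (S - s), φ (S - t) < 0 := by
        intro t ht
        obtain ⟨ht0, ht1⟩ := ht
        have hmem : S - t ∈ Set.Icc (0:ℝ) S := ⟨by linarith, by linarith⟩
        have := hanti ⟨hs0, hsS⟩ hmem (by linarith : s ≤ S - t)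
        linarith
      have hkey := lojasiewicz_barrier_key K α ε hK hα₁ hα₂ hε 0 (S - s)
        (by linarith) (fun t => -φ (S - t)) (fun t => φ' (S - t))
        (fun t ht => by
          obtain ⟨ht0, ht1⟩ := ht
          have hmem : S - t ∈ Set.Icc (0:ℝ) S := ⟨by linarith, by linarith⟩
          have hsub : HasDerivAt (fun t : ℝ => S - t) (-1) t := by
            exact (hasDerivAt_id' t).const_sub S
          have := (((hφ (S - t) hmem).comp t hsub).neg)
          exact this.congr_deriv (by ring))
        (fun t ht => by
          have := hneg t ht
          show (0:ℝ) < -φ (S - t)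
          linarith)
        (fun t ht => by
          show φ' (S - t) ≤ -(2 / K ^ 2) * (-φ (S - t)) ^ (2 / α)
          obtain ⟨ht0, ht1⟩ := ht
          have hmem : S - t ∈ Set.Icc (0:ℝ) S := ⟨by linarith, by linarith⟩
          have h1 := hODE (S - t) hmem
          have h2 : |φ (S - t)| = -φ (S - t) := abs_of_neg (hneg t ⟨ht0, ht1⟩)
          rw [h2] at h1
          rw [neg_mul]
          linarith)
        (by
          show -φ (S - (0:ℝ)) ≤ ε
          rw [sub_zero]; linarith)
      simp only [sub_zero, sub_sub_cancel] at hkey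
      linarith
  · -- upper bound
    by_cases hφs : φ s ≤ 0
    · have hb : (0 : ℝ) < (ε ^ (-(2 - α) / α)
          + 2 * (2 - α) / (K ^ 2 * α) * s) ^ (-α / (2 - α)) := by
        apply Real.rpow_pos_of_pos
        nlinarith
      linarith
    · push_neg at hφs
      have hpos : ∀ t ∈ Set.Icc 0 s, 0 < φ t := by
        intro t ht
        obtain ⟨ht0, ht1⟩ := ht
        have hmem : t ∈ Set.Icc (0:ℝ) S := ⟨ht0, by linarith⟩
        have := hanti hmem ⟨hs0, hsS⟩ ht1
        linarith
      have hkey := lojasiewicz_barrier_key K α ε hK hα₁ hα₂ hε 0 s hs0 φ φ'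
        (fun t ht => hφ t ⟨ht.1, by have := ht.2; linarith⟩)
        hpos
        (fun t ht => by
          have h1 := hODE t ⟨ht.1, by have := ht.2; linarith⟩
          have h2 : |φ t| = φ t := abs_of_pos (hpos t ht)
          rw [h2] at h1
          rw [neg_mul]
          linarith)
        h0
      simpa using hkey
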